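/- arXiv:2010.11759 — 5 statements merged into one kernel-verified Lean document; each statement's English description precedes it below -/
import Mathlib

section
/- For every positive integer n ≥ 3, the integral ∫_1^∞ (sin x / x)^n dx converges absolutely and satisfies 0 ≤ ∫_1^∞ (sin x / x)^n dx ≤ e^{-n/6}. -/
open Real MeasureTheory Set

lemma exp16_ub : Real.exp (1/6) ≤ 1.1816 := by
  have h := Real.exp_bound (x := (1/6:ℝ)) (by rw [abs_of_nonneg] <;> norm_num) (n := 3) (by norm_num)
  rw [abs_le] at h
  have h2 := h.2
  simp only [Finset.sum_range_succ, Finset.sum_range_zero] at h2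
  rw [abs_of_nonneg (by norm_num : (0:ℝ) ≤ 1/6)] at h2
  norm_num [Nat.factorial] at h2 ⊢
  linarith

lemma sin_one_ub : Real.sin 1 ≤ 0.8429 := by
  have pi3 : (3:ℝ) < π := Real.pi_gt_three
  have hq := Real.sin_bound (x := (1/4:ℝ)) (by rw [abs_of_nonneg] <;> norm_num)
  have hqc := Real.cos_bound (x := (1/4:ℝ)) (by rw [abs_of_nonneg] <;> norm_num)
  have hhc := Real.cos_bound (x := (1/2:ℝ)) (by rw [abs_of_nonneg] <;> norm_num)
  rw [abs_le, abs_of_nonneg (by norm_num : (0:ℝ) ≤ 1/4)] at hq hqc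
  rw [abs_le, abs_of_nonneg (by norm_num : (0:ℝ) ≤ 1/2)] at hhc
  have hs4 : Real.sin (1/4) ≤ 0.2476 := by nlinarith [hq.2]
  have hc4 : Real.cos (1/4) ≤ 0.96896 := by nlinarith [hqc.2]
  have hs4n : 0 ≤ Real.sin (1/4) := Real.sin_nonneg_of_nonneg_of_le_pi (by norm_num) (by linarith)
  have hc4n : 0 ≤ Real.cos (1/4) := Real.cos_nonneg_of_mem_Icc ⟨by linarith, by linarith⟩
  have hs2 : Real.sin (1/2) ≤ 0.47983 := by
    have h := Real.sin_two_mul (1/4 : ℝ)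
    norm_num at h
    rw [h]; nlinarith
  have hc2 : Real.cos (1/2) ≤ 0.87826 := by nlinarith [hhc.2]
  have hs2n : 0 ≤ Real.sin (1/2) := Real.sin_nonneg_of_nonneg_of_le_pi (by norm_num) (by linarith)
  have hc2n : 0 ≤ Real.cos (1/2) := Real.cos_nonneg_of_mem_Icc ⟨by linarith, by linarith⟩
  have h := Real.sin_two_mul (1/2 : ℝ)
  norm_num at h
  rw [h]; nlinarith

lemma sin_one_exp_le : Real.sin 1 * Real.exp (1/6) ≤ 1 := by
  have h1 := sin_one_ub
  have h2 := exp16_ub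
  have h3 : 0 < Real.exp (1/6) := Real.exp_pos _
  have h4 : 0 ≤ Real.sin 1 := Real.sin_nonneg_of_nonneg_of_le_pi (by norm_num) (by linarith [Real.pi_gt_three])
  nlinarith

set_option maxHeartbeats 2000000 in
theorem stmt_0 (n : ℕ) (hn : 3 ≤ n) :
    IntegrableOn (fun x : ℝ => (Real.sin x / x) ^ n) (Ioi 1) volume ∧
    0 ≤ ∫ x in Ioi (1 : ℝ), (Real.sin x / x) ^ n ∧
    ∫ x in Ioi (1 : ℝ), (Real.sin x / x) ^ n ≤ Real.exp (-(n : ℝ) / 6) := by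
  obtain ⟨f, hfdef⟩ : ∃ f : ℝ → ℝ, f = fun x => (Real.sin x / x) ^ n := ⟨_, rfl⟩
  have hfx : ∀ x, f x = (Real.sin x / x) ^ n := fun x => by rw [hfdef]
  rw [show (fun x : ℝ => (Real.sin x / x) ^ n) = f from hfdef.symm]
  have hn1 : (3:ℝ) ≤ (n:ℝ) := by exact_mod_cast hn
  have hnlt : -(n:ℝ) < -1 := by linarith
  have pi3 : (3:ℝ) < π := Real.pi_gt_three
  obtain ⟨E, hEdef⟩ : ∃ E : ℝ, E = Real.exp (1/6) := ⟨_, rfl⟩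
  have hE1 : 1 + 1/6 ≤ E := by
    have := Real.add_one_le_exp (1/6 : ℝ); rw [hEdef]; linarith
  have hE2 : E ≤ 4/3 := by
    have := exp16_ub; rw [hEdef]; norm_num at this ⊢; linarith
  have hEpos : (0:ℝ) < E := hEdef ▸ Real.exp_pos _
  have hE1' : (1:ℝ) < E := by linarith
  -- measurability
  have hmeas : Measurable f := by
    rw [hfdef]; exact (Real.measurable_sin.div measurable_id).pow_const n
  -- pointwise domination
  have hptw : ∀ x : ℝ, 0 < x → |f x| ≤ x ^ (-(n:ℝ)) := by
    intro x hx
    have h1 : |Real.sin x / x| ≤ x⁻¹ := by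
      rw [abs_div, abs_of_pos hx, div_le_iff₀ hx, inv_mul_cancel₀ hx.ne']
      exact Real.abs_sin_le_one x
    calc |f x| = |Real.sin x / x| ^ n := by rw [hfx]; exact abs_pow _ _
      _ ≤ x⁻¹ ^ n := pow_le_pow_left₀ (abs_nonneg _) h1 n
      _ = x ^ (-(n:ℝ)) := by
          rw [Real.rpow_neg hx.le, Real.rpow_natCast, inv_pow]
  -- integrability on Ioi a
  have hint : ∀ a : ℝ, 0 < a → IntegrableOn f (Ioi a) := by
    intro a ha
    refine (integrableOn_Ioi_rpow_of_lt hnlt ha).mono' hmeas.aestronglyMeasurable ?_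
    filter_upwards [ae_restrict_mem measurableSet_Ioi] with x hx
    rw [Real.norm_eq_abs]
    exact hptw x (ha.trans hx)
  have hint1 : IntegrableOn f (Ioi 1) := hint 1 one_pos
  -- tail bound
  have htail : ∀ a : ℝ, 0 < a → |∫ x in Ioi a, f x| ≤ a ^ (-(n:ℝ) + 1) / ((n:ℝ) - 1) := by
    intro a ha
    have h1 : |∫ x in Ioi a, f x| ≤ ∫ x in Ioi a, x ^ (-(n:ℝ)) := by
      calc |∫ x in Ioi a, f x| ≤ ∫ x in Ioi a, |f x| := by
            simpa [Real.norm_eq_abs] using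
              norm_integral_le_integral_norm (μ := volume.restrict (Ioi a)) f
        _ ≤ ∫ x in Ioi a, x ^ (-(n:ℝ)) := by
            refine setIntegral_mono_on (hint a ha).abs
              (integrableOn_Ioi_rpow_of_lt hnlt ha) measurableSet_Ioi ?_
            intro x hx
            exact hptw x (ha.trans hx)
    rw [integral_Ioi_rpow_of_lt hnlt ha] at h1
    have heq : -a ^ (-(n:ℝ) + 1) / (-(n:ℝ) + 1) = a ^ (-(n:ℝ) + 1) / ((n:ℝ) - 1) := by
      rw [div_eq_div_iff (by linarith) (by linarith)]; ring
    rw [heq] at h1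
    exact h1
  -- split the integral
  have hsplit : ∀ b : ℝ, 1 ≤ b →
      (∫ x in Ioi (1:ℝ), f x) = (∫ x in Ioc 1 b, f x) + ∫ x in Ioi b, f x := by
    intro b hb
    rw [← setIntegral_union (Ioc_disjoint_Ioi le_rfl) measurableSet_Ioi
      (hint1.mono Ioc_subset_Ioi_self le_rfl) (hint b (by linarith)),
      Ioc_union_Ioi_eq_Ioi hb]
  have h7 : (0:ℝ) < (n:ℝ) - 1 := by linarith
  -- lower bound
  have hlow : 0 ≤ ∫ x in Ioi (1:ℝ), f x := by
    rw [hsplit π (by linarith)]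
    set c : ℝ := Real.sin 1 / (π/2) with hcdef
    have hs34 : (3/4:ℝ) ≤ Real.sin 1 := by nlinarith [Real.sin_gt_sub_cube one_pos]
    have hcpos : 0 < c := div_pos (by linarith) (by linarith)
    have hA : (π/2 - 1) * c ^ n ≤ ∫ x in Ioc (1:ℝ) π, f x := by
      have step1 : (π/2 - 1) * c ^ n ≤ ∫ x in Ioc (1:ℝ) (π/2), f x := by
        have h1 : ∀ x ∈ Ioc (1:ℝ) (π/2), c ^ n ≤ f x := by
          intro x hx
          have hx1 : (1:ℝ) < x := hx.1
          have hx2 : x ≤ π/2 := hx.2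
          have hsins : Real.sin 1 ≤ Real.sin x :=
            Real.sin_le_sin_of_le_of_le_pi_div_two (by linarith) hx2 hx1.le
          have hsnn : 0 ≤ Real.sin x :=
            Real.sin_nonneg_of_nonneg_of_le_pi (by linarith) (by linarith)
          have hle : c ≤ Real.sin x / x := div_le_div₀ hsnn hsins (by linarith) hx2
          rw [hfx]
          exact pow_le_pow_left₀ hcpos.le hle n
        calc (π/2 - 1) * c ^ n = ∫ _x in Ioc (1:ℝ) (π/2), c ^ n := by
              rw [setIntegral_const, measureReal_def, Real.volume_Ioc,
                ENNReal.toReal_ofReal (by linarith), smul_eq_mul]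
          _ ≤ ∫ x in Ioc (1:ℝ) (π/2), f x :=
              setIntegral_mono_on
                (integrableOn_const (by rw [Real.volume_Ioc]; exact ENNReal.ofReal_ne_top))
                (hint1.mono (Ioc_subset_Ioi_self.trans (Ioi_subset_Ioi le_rfl)) le_rfl)
                measurableSet_Ioc h1
      have step2 : (∫ x in Ioc (1:ℝ) (π/2), f x) ≤ ∫ x in Ioc (1:ℝ) π, f x := by
        refine setIntegral_mono_set (hint1.mono Ioc_subset_Ioi_self le_rfl) ?_ ?_
        · filter_upwards [ae_restrict_mem measurableSet_Ioc] with x hx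
          have hs : 0 ≤ Real.sin x :=
            Real.sin_nonneg_of_nonneg_of_le_pi (by linarith [hx.1]) hx.2
          rw [hfx]
          exact pow_nonneg (div_nonneg hs (by linarith [hx.1])) n
        · exact (Ioc_subset_Ioc_right (by linarith)).eventuallyLE
      linarith
    have hB : -(π ^ (-(n:ℝ) + 1) / ((n:ℝ) - 1)) ≤ ∫ x in Ioi π, f x := by
      have h1 := htail π Real.pi_pos
      linarith [neg_abs_le (∫ x in Ioi π, f x)]
    have hπn : (0:ℝ) < π ^ n := by positivity
    have hkey : π ^ (-(n:ℝ) + 1) / ((n:ℝ) - 1) ≤ (π/2 - 1) * c ^ n := by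
      have heqπ : π ^ (-(n:ℝ) + 1) = π / π ^ n := by
        rw [Real.rpow_add Real.pi_pos, Real.rpow_one, Real.rpow_neg Real.pi_pos.le,
          Real.rpow_natCast]
        ring
      have hcn : c ^ n = (2 * Real.sin 1) ^ n / π ^ n := by
        rw [hcdef]
        rw [show Real.sin 1 / (π/2) = 2 * Real.sin 1 / π by field_simp]
        rw [div_pow]
      have h20 : ((3:ℝ)/2) ^ 3 ≤ (2 * Real.sin 1) ^ n := by
        calc ((3:ℝ)/2) ^ 3 ≤ ((3:ℝ)/2) ^ n := pow_le_pow_right₀ (by norm_num) hn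
          _ ≤ (2 * Real.sin 1) ^ n := pow_le_pow_left₀ (by norm_num) (by linarith) n
      have hmain : π / ((n:ℝ) - 1) ≤ (π/2 - 1) * (2 * Real.sin 1) ^ n := by
        have h21 : π / ((n:ℝ) - 1) ≤ π / 2 := by
          rw [div_le_div_iff₀ h7 two_pos]
          nlinarith [Real.pi_pos]
        have h22 : π / 2 ≤ (π/2 - 1) * (27/8) := by nlinarith
        have h23 : (π/2 - 1) * (27/8) ≤ (π/2 - 1) * (2 * Real.sin 1) ^ n := by
          have : (27:ℝ)/8 = (3/2)^3 := by norm_num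
          rw [this]
          exact mul_le_mul_of_nonneg_left h20 (by linarith)
        linarith
      rw [heqπ, hcn]
      have heq2 : π / π ^ n / ((n:ℝ) - 1) = (π / ((n:ℝ) - 1)) / π ^ n := by ring
      have heq3 : (π/2 - 1) * ((2 * Real.sin 1) ^ n / π ^ n)
          = ((π/2 - 1) * (2 * Real.sin 1) ^ n) / π ^ n := by ring
      rw [heq2, heq3]
      gcongr
    linarith
  -- upper bound
  have hup : (∫ x in Ioi (1:ℝ), f x) ≤ Real.exp (-(n:ℝ)/6) := by
    have hEn : Real.exp (-(n:ℝ)/6) = E⁻¹ ^ n := by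
      rw [hEdef, ← Real.exp_neg, ← Real.exp_nat_mul]
      congr 1
      ring
    have hP : (0:ℝ) < E⁻¹ ^ n := by positivity
    have hsin1 : Real.sin 1 ≤ E⁻¹ := by
      have h1 := sin_one_exp_le
      rw [← hEdef] at h1
      have h2 := mul_le_mul_of_nonneg_right h1 (inv_nonneg.2 hEpos.le)
      rw [one_mul, mul_assoc, mul_inv_cancel₀ hEpos.ne', mul_one] at h2
      exact h2
    have hcos1 : Real.cos 1 ≤ E⁻¹ := by
      have h1 : Real.cos 1 ≤ Real.sin 1 := by
        rw [← Real.sin_pi_div_two_sub]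
        exact Real.sin_le_sin_of_le_of_le_pi_div_two (by linarith)
          (by linarith) (by linarith [Real.pi_lt_d2])
      linarith
    have hub1 : (∫ x in Ioc (1:ℝ) E, f x) ≤ (E - 1) * E⁻¹ ^ n := by
      have hptE : ∀ x ∈ Ioc (1:ℝ) E, f x ≤ E⁻¹ ^ n := by
        intro x hx
        have hx1 : (1:ℝ) < x := hx.1
        have hxpos : (0:ℝ) < x := by linarith
        have hxE : x ≤ E := hx.2
        have hsinx : Real.sin x ≤ E⁻¹ * x := by
          have h1 : Real.sin x = Real.sin 1 * Real.cos (x - 1) + Real.cos 1 * Real.sin (x - 1) := by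
            rw [← Real.sin_add]; norm_num
          have h2 : Real.sin (x - 1) ≤ x - 1 := Real.sin_le (by linarith)
          have h3 : Real.cos (x - 1) ≤ 1 := Real.cos_le_one _
          have h4 : 0 ≤ Real.sin 1 :=
            Real.sin_nonneg_of_nonneg_of_le_pi (by norm_num) (by linarith)
          have p2 : Real.cos 1 * Real.sin (x - 1) ≤ Real.cos 1 * (x - 1) :=
            mul_le_mul_of_nonneg_left h2 Real.cos_one_pos.le
          have p4 : Real.cos 1 * (x - 1) ≤ E⁻¹ * (x - 1) :=
            mul_le_mul_of_nonneg_right hcos1 (by linarith)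
          have p1 : Real.sin 1 * Real.cos (x - 1) ≤ Real.sin 1 :=
            mul_le_of_le_one_right h4 h3
          have p5 : E⁻¹ + E⁻¹ * (x - 1) = E⁻¹ * x := by ring
          rw [h1]
          linarith
        have hsnn : 0 ≤ Real.sin x :=
          Real.sin_nonneg_of_nonneg_of_le_pi (by linarith) (by linarith)
        have hdle : Real.sin x / x ≤ E⁻¹ := by
          rw [div_le_iff₀ hxpos]; linarith
        have hdnn : 0 ≤ Real.sin x / x := div_nonneg hsnn hxpos.le
        rw [hfx]
        exact pow_le_pow_left₀ hdnn hdle n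
      calc (∫ x in Ioc (1:ℝ) E, f x) ≤ ∫ _x in Ioc (1:ℝ) E, E⁻¹ ^ n :=
            setIntegral_mono_on
              (hint1.mono Ioc_subset_Ioi_self le_rfl)
              (integrableOn_const (by rw [Real.volume_Ioc]; exact ENNReal.ofReal_ne_top))
              measurableSet_Ioc hptE
        _ = (E - 1) * E⁻¹ ^ n := by
            rw [setIntegral_const, measureReal_def, Real.volume_Ioc,
              ENNReal.toReal_ofReal (by linarith), smul_eq_mul]
    have hub2 : (∫ x in Ioi E, f x) ≤ E * E⁻¹ ^ n / ((n:ℝ) - 1) := by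
      have h1 := le_trans (le_abs_self _) (htail E hEpos)
      have heq : E ^ (-(n:ℝ) + 1) = E⁻¹ ^ n * E := by
        rw [Real.rpow_add hEpos, Real.rpow_one, Real.rpow_neg hEpos.le,
          Real.rpow_natCast, inv_pow]
      rw [heq] at h1
      calc (∫ x in Ioi E, f x) ≤ E⁻¹ ^ n * E / ((n:ℝ) - 1) := h1
        _ = E * E⁻¹ ^ n / ((n:ℝ) - 1) := by ring
    have h9 : E * E⁻¹ ^ n / ((n:ℝ) - 1) ≤ 2/3 * E⁻¹ ^ n := by
      rw [div_le_iff₀ h7]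
      nlinarith [hP, hE2, hn1]
    have h10 : (E - 1) * E⁻¹ ^ n ≤ 1/3 * E⁻¹ ^ n := by nlinarith [hP, hE2]
    rw [hsplit E hE1'.le, hEn]
    linarith
  exact ⟨hint1, hlow, hup⟩
end

section
/- For all real x with 0 < |x| ≤ 1, we have log(sin x / x) ≤ -x²/6. -/
open Real Set

-- sin x ≤ x - x^3/6 + x^5/96 on [0,1]
lemma sin_upper (x : ℝ) (hx0 : 0 ≤ x) (hx1 : x ≤ 1) :
    Real.sin x ≤ x - x ^ 3 / 6 + x ^ 5 / 96 := by
  have key : MonotoneOn (fun y : ℝ => y - y ^ 3 / 6 + y ^ 5 / 96 - Real.sin y) (Icc 0 1) := by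
    have hdiff : Differentiable ℝ (fun y : ℝ => y - y ^ 3 / 6 + y ^ 5 / 96 - Real.sin y) := by
      fun_prop
    apply monotoneOn_of_deriv_nonneg (convex_Icc 0 1) (hdiff.continuous.continuousOn)
      (hdiff.differentiableOn)
    · intro y hy
      rw [interior_Icc] at hy
      have hd : HasDerivAt (fun y : ℝ => y - y ^ 3 / 6 + y ^ 5 / 96 - Real.sin y)
          (1 - 3 * y ^ 2 / 6 + 5 * y ^ 4 / 96 - Real.cos y) y := by
        have h := (((hasDerivAt_id y).sub ((hasDerivAt_pow 3 y).div_const 6)).add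
          ((hasDerivAt_pow 5 y).div_const 96)).sub (Real.hasDerivAt_sin y)
        exact h.congr_deriv (by norm_num)
      rw [hd.deriv]
      have hy1 : |y| ≤ 1 := by rw [abs_of_nonneg hy.1.le]; exact hy.2.le
      have := Real.cos_bound hy1
      rw [abs_of_nonneg hy.1.le] at this
      have := abs_sub_le_iff.1 this
      nlinarith [this.1, this.2]
  have h := key ⟨le_refl 0, by norm_num⟩ ⟨hx0, hx1⟩ hx0
  simp [Real.sin_zero] at h
  linarith

lemma main_pos (x : ℝ) (hx0 : 0 < x) (hx1 : x ≤ 1) :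
    Real.log (Real.sin x / x) ≤ -x ^ 2 / 6 := by
  have hsin : 0 < Real.sin x :=
    Real.sin_pos_of_pos_of_lt_pi hx0 (lt_of_le_of_lt hx1 (by linarith [Real.pi_gt_three]))
  -- lower bound for exp(-x^2/6)
  set t : ℝ := x ^ 2 / 6 with ht
  have ht0 : 0 ≤ t := by positivity
  have ht1 : t ≤ 1 := by nlinarith
  have habs : |(-t)| ≤ 1 := by rw [abs_neg, abs_of_nonneg ht0]; exact ht1
  have hexp := Real.exp_bound habs (n := 4) (by norm_num)
  have hsum : ∑ m ∈ Finset.range 4, (-t) ^ m / (Nat.factorial m) = 1 - t + t ^ 2 / 2 - t ^ 3 / 6 := by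
    simp [Finset.sum_range_succ, Nat.factorial]
    ring
  rw [hsum, abs_neg, abs_of_nonneg ht0] at hexp
  have hexp' : 1 - t + t ^ 2 / 2 - t ^ 3 / 6 - t ^ 4 * (5 / 96) ≤ Real.exp (-t) := by
    have := (abs_sub_le_iff.1 hexp).2
    norm_num [Nat.factorial] at this ⊢
    linarith
  -- sin x / x ≤ exp (-t)
  have hsx : Real.sin x / x ≤ Real.exp (-t) := by
    have h1 := sin_upper x hx0.le hx1
    have h2 : Real.sin x / x ≤ 1 - x ^ 2 / 6 + x ^ 4 / 96 := by
      rw [div_le_iff₀ hx0]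
      nlinarith
    refine h2.trans (le_trans ?_ hexp')
    rw [ht]
    nlinarith [sq_nonneg x, sq_nonneg (x^2), sq_nonneg (x^3), pow_le_one₀ hx0.le hx1 (n := 2),
      pow_le_one₀ hx0.le hx1 (n := 4), pow_le_one₀ hx0.le hx1 (n := 6), pow_le_one₀ hx0.le hx1 (n := 8)]
  calc Real.log (Real.sin x / x) ≤ Real.log (Real.exp (-t)) :=
        Real.log_le_log (by positivity) hsx
    _ = -x ^ 2 / 6 := by rw [Real.log_exp]; ring

theorem stmt_1 (x : ℝ) (hx0 : 0 < |x|) (hx1 : |x| ≤ 1) :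
    Real.log (Real.sin x / x) ≤ -x ^ 2 / 6 := by
  rcases lt_or_gt_of_ne (abs_pos.mp hx0) with hneg | hpos
  · have := main_pos (-x) (by linarith) (by rwa [abs_of_neg hneg] at hx1)
    rw [Real.sin_neg, neg_div_neg_eq] at this
    simpa using this
  · exact main_pos x hpos (by rwa [abs_of_pos hpos] at hx1)
end

section
/- For all real x with 0 < |x| ≤ 1, (sin x / x)^n ≤ exp(-n x² / 6) for every positive integer n. -/
open Finset Complex

lemma sin_bound6 {x : ℝ} (hx : |x| ≤ 1) :
    |Real.sin x - (x - x ^ 3 / 6 + x ^ 5 / 120)| ≤ |x| ^ 6 * (7 / 4320) :=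
  calc
    |Real.sin x - (x - x ^ 3 / 6 + x ^ 5 / 120)|
        = ‖Complex.sin x - (x - x ^ 3 / 6 + x ^ 5 / 120 : ℝ)‖ := by
      rw [← Real.norm_eq_abs, ← Complex.norm_real]; simp
    _ = ‖((Complex.exp (-x * I) - ∑ m ∈ range 6, (-x * I) ^ m / m.factorial) -
            (Complex.exp (x * I) - ∑ m ∈ range 6, (x * I) ^ m / m.factorial)) * I / 2‖ := by
      congr 1
      simp only [Complex.sin, Finset.sum_range_succ, Finset.range_zero, Finset.sum_empty]
      push_cast
      field_simp
      ring_nf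
      have h6 : (I : ℂ) ^ 6 = -1 := by
        rw [(by norm_num : (6 : ℕ) = 2 * 3), pow_mul, Complex.I_sq]; norm_num
      norm_num [Complex.ext_iff, ← Complex.ofReal_pow, Nat.factorial, h6]
      ring
    _ ≤ ‖(Complex.exp (-x * I) - ∑ m ∈ range 6, (-x * I) ^ m / m.factorial) * I / 2‖ +
          ‖-((Complex.exp (x * I) - ∑ m ∈ range 6, (x * I) ^ m / m.factorial) * I) / 2‖ := by
      rw [sub_mul, sub_eq_add_neg, add_div]; exact norm_add_le _ _
    _ = ‖Complex.exp (x * I) - ∑ m ∈ range 6, (x * I) ^ m / m.factorial‖ / 2 +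
          ‖Complex.exp (-x * I) - ∑ m ∈ range 6, (-x * I) ^ m / m.factorial‖ / 2 := by
      simp [add_comm, map_div₀]
    _ ≤ ‖(x : ℂ) * I‖ ^ 6 * (Nat.succ 6 * ((Nat.factorial 6) * (6 : ℕ) : ℝ)⁻¹) / 2 +
          ‖-(x : ℂ) * I‖ ^ 6 * (Nat.succ 6 * ((Nat.factorial 6) * (6 : ℕ) : ℝ)⁻¹) / 2 := by
      gcongr
      · exact Complex.exp_bound (by simpa) (by decide)
      · exact Complex.exp_bound (by simpa) (by decide)
    _ ≤ |x| ^ 6 * (7 / 4320) := by norm_num [Nat.factorial]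

lemma key_ineq {t : ℝ} (h0 : 0 < t) (h1 : t ≤ 1) :
    Real.sin t / t ≤ Real.exp (-(t ^ 2) / 6) := by
  have hb := sin_bound6 (x := t) (by rwa [abs_of_pos h0])
  rw [abs_of_pos h0] at hb
  have hs : Real.sin t ≤ t - t ^ 3 / 6 + t ^ 5 / 120 + t ^ 6 * (7 / 4320) := by
    have := (abs_le.1 hb).2; linarith
  have h1' : (0:ℝ) ≤ 1 - t ^ 2 / 24 := by nlinarith
  have h2 : 1 - t ^ 2 / 24 ≤ Real.exp (-(t ^ 2 / 24)) := by
    have := Real.add_one_le_exp (-(t ^ 2 / 24)); linarith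
  have hexp : (1 - t ^ 2 / 24) ^ 4 ≤ Real.exp (-(t ^ 2) / 6) := by
    calc (1 - t ^ 2 / 24) ^ 4 ≤ Real.exp (-(t ^ 2 / 24)) ^ 4 := by
          exact pow_le_pow_left₀ h1' h2 4
      _ = Real.exp (-(t ^ 2) / 6) := by
          rw [← Real.exp_nat_mul]; ring_nf
  have hdiv : Real.sin t / t ≤ 1 - t ^ 2 / 6 + t ^ 4 / 120 + t ^ 5 * (7 / 4320) := by
    rw [div_le_iff₀ h0]; nlinarith
  refine hdiv.trans (le_trans ?_ hexp)
  have h5 : t ^ 5 ≤ t ^ 4 := pow_le_pow_of_le_one h0.le h1 (by norm_num)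
  have h6 : t ^ 6 ≤ t ^ 4 := pow_le_pow_of_le_one h0.le h1 (by norm_num)
  nlinarith [pow_nonneg h0.le 8, pow_nonneg h0.le 4]

theorem stmt_2 (x : ℝ) (hx0 : 0 < |x|) (hx1 : |x| ≤ 1) (n : ℕ) (hn : 0 < n) :
    (Real.sin x / x) ^ n ≤ Real.exp (-(n : ℝ) * x ^ 2 / 6) := by
  have heq : Real.sin x / x = Real.sin |x| / |x| := by
    rcases lt_trichotomy x 0 with h | h | h
    · rw [abs_of_neg h, Real.sin_neg, neg_div_neg_eq]
    · simp [h] at hx0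
    · rw [abs_of_pos h]
  have h0 : 0 < |x| := hx0
  have hsin : 0 < Real.sin |x| :=
    Real.sin_pos_of_pos_of_lt_pi h0 (lt_of_le_of_lt hx1 (by linarith [Real.pi_gt_three]))
  have hpos : 0 < Real.sin x / x := heq ▸ div_pos hsin h0
  have hkey : Real.sin x / x ≤ Real.exp (-(x ^ 2) / 6) := by
    rw [heq, ← _root_.sq_abs x]; exact key_ineq h0 hx1
  calc (Real.sin x / x) ^ n ≤ Real.exp (-(x ^ 2) / 6) ^ n := pow_le_pow_left₀ hpos.le hkey n
    _ = Real.exp (-(n : ℝ) * x ^ 2 / 6) := by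
        rw [← Real.exp_nat_mul]; ring_nf
end

section
/- For every odd integer n ≥ 3 and every integer k ≥ 0, ∫_{2kπ + π/2}^{2(k+1)π + π/2} (sin x / x)^n dx ≥ 0. -/
open Real Set intervalIntegral

lemma key_convex (n : ℕ) (hn : 3 ≤ n) {u u' v v' : ℝ} (hu : 0 < u)
    (h1 : u ≤ u') (h2 : u' ≤ v') (hsum : u + v' = u' + v) :
    1 / u' ^ n + 1 / v ^ n ≤ 1 / u ^ n + 1 / v' ^ n := by
  have hφ : ConvexOn ℝ (Ioi 0) fun x : ℝ => x ^ (-(n:ℤ)) := by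
    refine (strictConvexOn_zpow ?_ ?_).convexOn <;> omega
  have hv : 0 < v := by linarith
  have hu' : 0 < u' := by linarith
  have hv' : 0 < v' := by linarith
  have conv : u' ^ (-(n:ℤ)) + v ^ (-(n:ℤ)) ≤ u ^ (-(n:ℤ)) + v' ^ (-(n:ℤ)) := by
    rcases eq_or_lt_of_le (h1.trans h2) with he | hlt
    · have e1 : u = u' := le_antisymm h1 (by linarith)
      have e2 : v = v' := by linarith
      rw [e1, e2]
    · have hdpos : (0:ℝ) < v' - u := by linarith
      have hlam0 : 0 ≤ (v' - u') / (v' - u) := by apply div_nonneg <;> linarith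
      have hmu0 : 0 ≤ (u' - u) / (v' - u) := by apply div_nonneg <;> linarith
      have hlm : (v' - u') / (v' - u) + (u' - u) / (v' - u) = 1 := by
        field_simp; ring
      have e1 : ((v' - u') / (v' - u)) * u + ((u' - u) / (v' - u)) * v' = u' := by
        field_simp; ring
      have e2 : ((u' - u) / (v' - u)) * u + ((v' - u') / (v' - u)) * v' = v := by
        field_simp; nlinarith [hsum]
      have i1 := hφ.2 (mem_Ioi.2 hu) (mem_Ioi.2 hv') hlam0 hmu0 hlm
      have i2 := hφ.2 (mem_Ioi.2 hu) (mem_Ioi.2 hv') hmu0 hlam0 (by linarith)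
      simp only [smul_eq_mul] at i1 i2
      rw [e1] at i1; rw [e2] at i2
      have hA : ((v' - u') / (v' - u)) * u ^ (-(n:ℤ)) + ((u' - u) / (v' - u)) * u ^ (-(n:ℤ))
          = u ^ (-(n:ℤ)) := by rw [← add_mul, hlm, one_mul]
      have hB : ((v' - u') / (v' - u)) * v' ^ (-(n:ℤ)) + ((u' - u) / (v' - u)) * v' ^ (-(n:ℤ))
          = v' ^ (-(n:ℤ)) := by rw [← add_mul, hlm, one_mul]
      linarith [i1, i2]
  have hrec : ∀ x : ℝ, 0 < x → x ^ (-(n:ℤ)) = 1 / x ^ n := by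
    intro x hx
    rw [zpow_neg, zpow_natCast, one_div]
  rw [hrec u hu, hrec u' hu', hrec v hv, hrec v' hv'] at conv
  linarith

theorem stmt_17 (n : ℕ) (hodd : Odd n) (hn : 3 ≤ n) (k : ℕ) :
    0 ≤ ∫ x in (2 * k * π + π / 2)..(2 * (k + 1) * π + π / 2), (Real.sin x / x) ^ n := by
  have hπ := pi_pos
  set a : ℝ := 2 * k * π + π / 2 with ha
  have ha0 : 0 < a := by
    have : (0:ℝ) ≤ 2 * k * π := by positivity
    rw [ha]; linarith
  rw [show 2 * ((k:ℝ) + 1) * π + π / 2 = a + 2 * π from by rw [ha]; ring]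
  set f : ℝ → ℝ := fun t => (Real.cos t / (a + t)) ^ n with hf
  have hfc : ContinuousOn f (Ici 0) := by
    apply ContinuousOn.pow
    apply ContinuousOn.div Real.continuous_cos.continuousOn
      (continuous_const.add continuous_id).continuousOn
    intro t ht
    have : (0:ℝ) ≤ t := ht
    exact (show (0:ℝ) < a + t by linarith).ne'
  have hint : ∀ c d : ℝ, 0 ≤ c → 0 ≤ d → IntervalIntegrable f MeasureTheory.volume c d := by
    intro c d hc hd
    exact (hfc.mono (fun x hx => le_trans (le_min hc hd) hx.1)).intervalIntegrable
  have hsin : ∀ t : ℝ, Real.sin (a + t) = Real.cos t := by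
    intro t
    rw [show a + t = (t + π / 2) + (k : ℝ) * (2 * π) from by rw [ha]; ring]
    exact (Real.sin_add_nat_mul_two_pi _ k).trans (Real.sin_add_pi_div_two t)
  have h1 : (∫ x in a..(a + 2 * π), (Real.sin x / x) ^ n) = ∫ t in (0:ℝ)..(2 * π), f t := by
    have h := intervalIntegral.integral_comp_add_left (a := 0) (b := 2 * π)
      (fun x => (Real.sin x / x) ^ n) a
    rw [add_zero] at h
    rw [← h]
    apply intervalIntegral.integral_congr
    intro t _
    simp only [hf, hsin]
  set F : ℝ → ℝ := fun t => f t + f (2 * π - t) with hF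
  have i1 : IntervalIntegrable f MeasureTheory.volume 0 π :=
    hint 0 π le_rfl (by positivity)
  have i2 : IntervalIntegrable f MeasureTheory.volume π (2 * π) :=
    hint π (2 * π) (by positivity) (by positivity)
  have i3 : IntervalIntegrable (fun t => f (2 * π - t)) MeasureTheory.volume 0 π := by
    have h := (hint (2 * π) π (by positivity) (by positivity)).comp_sub_left (2 * π)
    rwa [show 2 * π - 2 * π = (0:ℝ) by ring, show 2 * π - π = π by ring] at h
  have h2 : (∫ t in (0:ℝ)..(2 * π), f t) = ∫ t in (0:ℝ)..π, F t := by
    rw [← intervalIntegral.integral_add_adjacent_intervals i1 i2]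
    have hrefl : (∫ t in π..(2 * π), f t) = ∫ t in (0:ℝ)..π, f (2 * π - t) := by
      rw [intervalIntegral.integral_comp_sub_left f (2 * π)]
      rw [show 2 * π - π = π by ring, sub_zero]
    rw [hrefl, ← intervalIntegral.integral_add i1 i3]
  have j1 : IntervalIntegrable F MeasureTheory.volume 0 (π / 2) := by
    apply IntervalIntegrable.add (hint 0 (π / 2) le_rfl (by positivity))
    have h := (hint (2 * π) (3 * π / 2) (by positivity) (by positivity)).comp_sub_left (2 * π)
    rwa [show 2 * π - 2 * π = (0:ℝ) by ring, show 2 * π - 3 * π / 2 = π / 2 by ring] at h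
  have j2 : IntervalIntegrable F MeasureTheory.volume (π / 2) π := by
    apply IntervalIntegrable.add (hint (π / 2) π (by positivity) (by positivity))
    have h := (hint (3 * π / 2) π (by positivity) (by positivity)).comp_sub_left (2 * π)
    rwa [show 2 * π - 3 * π / 2 = π / 2 by ring, show 2 * π - π = π by ring] at h
  have j3 : IntervalIntegrable (fun t => F (π - t)) MeasureTheory.volume 0 (π / 2) := by
    have h := (j2.symm).comp_sub_left π
    rwa [sub_self, show π - π / 2 = π / 2 by ring] at h
  have h3 : (∫ t in (0:ℝ)..π, F t) = ∫ t in (0:ℝ)..(π / 2), (F t + F (π - t)) := by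
    rw [← intervalIntegral.integral_add_adjacent_intervals j1 j2]
    have hrefl : (∫ t in (π / 2)..π, F t) = ∫ t in (0:ℝ)..(π / 2), F (π - t) := by
      rw [intervalIntegral.integral_comp_sub_left F π]
      rw [show π - π / 2 = π / 2 by ring, sub_zero]
    rw [hrefl, ← intervalIntegral.integral_add j1 j3]
  rw [h1, h2, h3]
  apply intervalIntegral.integral_nonneg (by positivity)
  intro t ht
  obtain ⟨ht0, ht1⟩ := ht
  have hc : 0 ≤ Real.cos t := Real.cos_nonneg_of_mem_Icc ⟨by linarith, ht1⟩
  have hcn : 0 ≤ Real.cos t ^ n := pow_nonneg hc n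
  simp only [hF, hf]
  rw [Real.cos_two_pi_sub, Real.cos_pi_sub,
    show 2 * π - (π - t) = π + t by ring,
    show Real.cos (π + t) = -Real.cos t from by rw [add_comm]; exact Real.cos_add_pi t]
  have hkey := key_convex n hn (u := a + t) (u' := a + (π + t)) (v := a + (π - t))
    (v' := a + (2 * π - t)) (by linarith) (by linarith) (by linarith) (by ring)
  rw [neg_div, neg_div, hodd.neg_pow, hodd.neg_pow, div_pow, div_pow, div_pow, div_pow]
  have hmul := mul_le_mul_of_nonneg_left hkey hcn
  simp only [mul_add, mul_one_div] at hmul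
  linarith
end

section
/- For every positive integer n and real x with 0 < x ≤ π/2, 0 ≥ log(sin x / x) − P(x) ≥ −1.4·10^{−12} x^{22}, where P(x) = Σ_{k=1}^{10} a_{2k} x^{2k} is the degree-20 Taylor polynomial of log(sin x / x) at 0 (only even terms occur). -/
open Real Filter Finset Topology
open scoped NNReal ENNReal

noncomputable def zet (k : ℕ) : ℝ := ∑' j : ℕ, (1 : ℝ) / ((j : ℝ) + 1) ^ (2 * k)

lemma zet_summable {k : ℕ} (hk : 1 ≤ k) :
    Summable (fun j : ℕ => (1 : ℝ) / ((j : ℝ) + 1) ^ (2 * k)) := by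
  have h2 : Summable (fun j : ℕ => (1 : ℝ) / ((j : ℝ) + 1) ^ 2) := by
    have := (summable_nat_add_iff (f := fun n : ℕ => (1 : ℝ) / (n : ℝ) ^ 2) 1).2
      (summable_one_div_nat_pow.2 (by norm_num))
    simpa using this
  refine Summable.of_nonneg_of_le (fun j => by positivity) (fun j => ?_) h2
  apply one_div_le_one_div_of_le (by positivity)
  exact pow_le_pow_right₀ (by push_cast; linarith [Nat.cast_nonneg (α := ℝ) j]) (by omega)

lemma zet_nonneg (k : ℕ) : 0 ≤ zet k :=
  tsum_nonneg (fun j => by positivity)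

lemma zet_antitone {k l : ℕ} (hk : 1 ≤ k) (hkl : k ≤ l) : zet l ≤ zet k := by
  refine Summable.tsum_le_tsum (fun j => ?_) (zet_summable (le_trans hk hkl)) (zet_summable hk)
  apply one_div_le_one_div_of_le (by positivity)
  exact pow_le_pow_right₀ (by push_cast; linarith [Nat.cast_nonneg (α := ℝ) j]) (by omega)

lemma hasSum_telescope : HasSum (fun j : ℕ => (1:ℝ) / ((j:ℝ)+1) / ((j:ℝ)+2)) 1 := by
  have hsumm : Summable (fun j : ℕ => (1:ℝ) / ((j:ℝ)+1) / ((j:ℝ)+2)) := by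
    have h2 : Summable (fun j : ℕ => (1 : ℝ) / ((j : ℝ) + 1) ^ 2) := by
      have := (summable_nat_add_iff (f := fun n : ℕ => (1 : ℝ) / (n : ℝ) ^ 2) 1).2
        (summable_one_div_nat_pow.2 (by norm_num))
      simpa using this
    refine Summable.of_nonneg_of_le (fun j => by positivity) (fun j => ?_) h2
    rw [div_div, pow_two]
    apply one_div_le_one_div_of_le (by positivity)
    have : (0:ℝ) ≤ (j:ℝ) + 1 := by positivity
    nlinarith
  rw [hsumm.hasSum_iff_tendsto_nat]
  have key : ∀ n : ℕ, ∑ j ∈ range n, (1:ℝ) / ((j:ℝ)+1) / ((j:ℝ)+2) = 1 - 1/((n:ℝ)+1) := by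
    intro n
    induction n with
    | zero => simp
    | succ m ih =>
      rw [Finset.sum_range_succ, ih]
      push_cast
      have h1 : ((m:ℝ)+1) ≠ 0 := by positivity
      have h2 : ((m:ℝ)+2) ≠ 0 := by positivity
      field_simp
      ring
  simp_rw [key]
  have : Tendsto (fun n : ℕ => 1/((n:ℝ)+1)) atTop (nhds 0) :=
    tendsto_one_div_add_atTop_nhds_zero_nat
  simpa using (tendsto_const_nhds (x := (1:ℝ)).sub this)

lemma zet11_le : zet 11 ≤ 1 + 1e-6 := by
  have hs := zet_summable (k := 11) (by norm_num)
  have h0 : zet 11 = 1 + ∑' j : ℕ, (1:ℝ) / ((j:ℝ)+2) ^ 22 := by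
    rw [zet, Summable.tsum_eq_zero_add hs]
    norm_num
    apply tsum_congr
    intro j
    push_cast
    ring_nf
  rw [h0]
  have htail : ∑' j : ℕ, (1:ℝ) / ((j:ℝ)+2) ^ 22 ≤ (2:ℝ)⁻¹ ^ 20 * 1 := by
    have hsum2 : HasSum (fun j : ℕ => (2:ℝ)⁻¹ ^ 20 * ((1:ℝ) / ((j:ℝ)+1) / ((j:ℝ)+2)))
        ((2:ℝ)⁻¹ ^ 20 * 1) := hasSum_telescope.mul_left _
    have hsumm22 : Summable (fun j : ℕ => (1:ℝ) / ((j:ℝ)+2) ^ 22) := by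
      have := (summable_nat_add_iff (f := fun j : ℕ => (1:ℝ) / ((j:ℝ)+1) ^ (2*11)) 1).2 hs
      refine this.congr fun j => ?_
      push_cast; ring_nf
    refine (Summable.tsum_le_tsum (fun j => ?_) hsumm22 hsum2.summable).trans_eq hsum2.tsum_eq
    have hj2 : (2:ℝ) ≤ (j:ℝ) + 2 := by linarith [Nat.cast_nonneg (α := ℝ) j]
    have h20 : (2:ℝ) ^ 20 ≤ ((j:ℝ)+2) ^ 20 := pow_le_pow_left₀ (by norm_num) hj2 20
    have hsq : ((j:ℝ)+1) * ((j:ℝ)+2) ≤ ((j:ℝ)+2) ^ 2 := by nlinarith [Nat.cast_nonneg (α := ℝ) j]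
    rw [div_div, mul_one_div, div_le_div_iff₀ (by positivity) (by positivity)]
    calc (1:ℝ) * (((j:ℝ)+1) * ((j:ℝ)+2)) = ((j:ℝ)+1) * ((j:ℝ)+2) := by ring
    _ ≤ ((j:ℝ)+2)^2 := hsq
    _ = (2:ℝ)⁻¹^20 * ((2:ℝ)^20 * ((j:ℝ)+2)^2) := by rw [← mul_assoc]; norm_num
    _ ≤ (2:ℝ)⁻¹^20 * (((j:ℝ)+2)^20 * ((j:ℝ)+2)^2) := by
        have : (0:ℝ) ≤ ((j:ℝ)+2)^2 := by positivity
        have := mul_le_mul_of_nonneg_right h20 this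
        nlinarith [pow_nonneg (le_trans (by norm_num) hj2) 20]
    _ = (2:ℝ)⁻¹^20 * ((j:ℝ)+2)^22 := by ring
  linarith [htail]

lemma hasSum_log_sinc {x : ℝ} (hx0 : 0 < x) (hx : x < π) :
    HasSum (fun m : ℕ => -(zet (m+1) / (((m:ℝ)+1) * π ^ (2*(m+1)))) * x ^ (2*(m+1)))
      (Real.log (Real.sin x / x)) := by
  have hpi := pi_pos
  set T : ℝ := x ^ 2 / π ^ 2 with hT
  set t : ℕ → ℝ := fun j => x ^ 2 / (π ^ 2 * ((j:ℝ)+1) ^ 2) with htdef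
  have hj1 : ∀ j : ℕ, (1:ℝ) ≤ ((j:ℝ)+1) := fun j => by
    have := Nat.cast_nonneg (α := ℝ) j; linarith
  have ht0 : ∀ j, 0 < t j := fun j => by
    have := hj1 j
    apply div_pos (by positivity) (by positivity)
  have hx2pi : x ^ 2 < π ^ 2 := by nlinarith
  have ht1 : ∀ j, t j < 1 := fun j => by
    have h1 := hj1 j
    rw [div_lt_one (by positivity)]
    nlinarith [sq_nonneg ((j:ℝ)+1), mul_le_mul_of_nonneg_left ((one_le_sq_iff_one_le_abs _).2 (by rw [abs_of_pos (by linarith)]; exact h1) : (1:ℝ) ≤ ((j:ℝ)+1)^2) (sq_nonneg π)]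
  have htT : ∀ j, t j ≤ T := fun j => by
    have h1 := hj1 j
    apply div_le_div_of_nonneg_left (by positivity) (by positivity)
    nlinarith [mul_le_mul_of_nonneg_left ((one_le_sq_iff_one_le_abs _).2 (by rw [abs_of_pos (by linarith)]; exact h1) : (1:ℝ) ≤ ((j:ℝ)+1)^2) (sq_nonneg π)]
  have hT1 : T < 1 := by
    rw [hT, div_lt_one (by positivity)]; exact hx2pi
  have hT0 : 0 < T := by positivity
  have hsin : 0 < Real.sin x := Real.sin_pos_of_pos_of_lt_pi hx0 hx
  -- Euler product
  have heuler : Tendsto (fun n : ℕ => x * ∏ j ∈ range n, (1 - t j)) atTop (𝓝 (Real.sin x)) := by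
    have h := Real.tendsto_euler_sin_prod (x / π)
    have hxpi : π * (x / π) = x := by field_simp
    rw [hxpi] at h
    refine h.congr fun n => ?_
    congr 1
    apply Finset.prod_congr rfl
    intro j _
    rw [htdef]
    rw [div_pow, div_div]
  -- log of partial products
  have hprodpos : ∀ n : ℕ, ∀ j ∈ range n, (0:ℝ) < 1 - t j := fun n j _ => by
    linarith [ht1 j]
  have hlog : Tendsto (fun n : ℕ => ∑ j ∈ range n, Real.log (1 - t j)) atTop
      (𝓝 (Real.log (Real.sin x / x))) := by
    have h1 : Tendsto (fun n : ℕ => Real.log (x * ∏ j ∈ range n, (1 - t j))) atTop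
        (𝓝 (Real.log (Real.sin x))) := heuler.log hsin.ne'
    have h2 : ∀ n : ℕ, Real.log (x * ∏ j ∈ range n, (1 - t j))
        = Real.log x + ∑ j ∈ range n, Real.log (1 - t j) := by
      intro n
      rw [Real.log_mul hx0.ne' (Finset.prod_ne_zero_iff.2 fun j hj => (hprodpos n j hj).ne'),
        Real.log_prod]
      intro j hj; exact (hprodpos n j hj).ne'
    simp_rw [h2] at h1
    have h3 := h1.sub (tendsto_const_nhds (x := Real.log x))
    simp only [add_sub_cancel_left] at h3
    rw [Real.log_div hsin.ne' hx0.ne']; exact h3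
  -- double sum family
  set F : ℕ × ℕ → ℝ := fun p => t p.1 ^ (p.2 + 1) / ((p.2:ℝ) + 1) with hF
  have hFnonneg : ∀ p, 0 ≤ F p := fun p => by
    have := ht0 p.1
    positivity
  have hfiber : ∀ j : ℕ, HasSum (fun m => F (j, m)) (-Real.log (1 - t j)) := fun j => by
    have := Real.hasSum_pow_div_log_of_abs_lt_one
      (x := t j) (by rw [abs_of_pos (ht0 j)]; exact ht1 j)
    refine this.congr_fun fun m => ?_
    push_cast; rfl
  have hle : ∀ j : ℕ, -Real.log (1 - t j) ≤ (1/(1-T)) * t j := fun j => by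
    have h1 : 0 < 1 - t j := by linarith [ht1 j]
    have h1T : (0:ℝ) < 1 - T := by linarith
    have h2 : -Real.log (1 - t j) = Real.log (1 - t j)⁻¹ := by rw [Real.log_inv]
    rw [h2]
    have h3 := Real.log_le_sub_one_of_pos (x := (1 - t j)⁻¹) (by positivity)
    have h4 : (1 - t j)⁻¹ - 1 = t j / (1 - t j) := by field_simp; ring
    rw [h4] at h3
    refine h3.trans ?_
    rw [one_div, ← div_eq_inv_mul]
    exact div_le_div_of_nonneg_left (ht0 j).le h1T (by linarith [htT j])
  have hsummt : Summable t := by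
    have := (zet_summable (k := 1) le_rfl).mul_left T
    refine this.congr fun j => ?_
    have h1 : ((j:ℝ)+1) ≠ 0 := by positivity
    rw [htdef, hT]
    simp only [pow_one, mul_one]
    field_simp
  have hsummF : Summable F := by
    refine (summable_prod_of_nonneg hFnonneg).2 ⟨fun j => (hfiber j).summable, ?_⟩
    have htsum : ∀ j, ∑' m, F (j,m) = -Real.log (1 - t j) := fun j => (hfiber j).tsum_eq
    refine Summable.of_nonneg_of_le (fun j => ?_) (fun j => ?_) (hsummt.mul_left (1/(1-T)))
    · rw [htsum j]
      have := Real.log_nonpos (x := 1 - t j) (by linarith [ht1 j]) (by linarith [ht0 j])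
      linarith
    · rw [htsum j]; exact hle j
  have hrow : HasSum (fun j => -Real.log (1 - t j)) (∑' p, F p) :=
    hsummF.hasSum.prod_fiberwise hfiber
  have hrow' : HasSum (fun j => Real.log (1 - t j)) (Real.log (Real.sin x / x)) := by
    have hsl : Summable (fun j => Real.log (1 - t j)) := by
      have := hrow.summable.neg
      simpa using this
    exact (hsl.hasSum_iff_tendsto_nat).2 hlog
  have hSval : (∑' p, F p) = -(Real.log (Real.sin x / x)) := hrow.unique hrow'.neg
  have hFsum : HasSum F (-(Real.log (Real.sin x / x))) := hSval ▸ hsummF.hasSum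
  have hswap : HasSum (fun q : ℕ × ℕ => F (q.2, q.1)) (-(Real.log (Real.sin x / x))) :=
    ((Equiv.prodComm ℕ ℕ).hasSum_iff (f := F)).2 hFsum
  have hcol : ∀ m : ℕ, HasSum (fun j => F (j, m)) (T^(m+1)/((m:ℝ)+1) * zet (m+1)) := fun m => by
    have h := ((zet_summable (k := m+1) (Nat.le_add_left 1 m)).hasSum).mul_left
      (T^(m+1)/((m:ℝ)+1))
    refine h.congr_fun fun j => ?_
    have h1 : ((j:ℝ)+1) ≠ 0 := by positivity
    have h2 : (π:ℝ) ≠ 0 := hpi.ne'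
    rw [hF, htdef, hT]
    simp only
    rw [pow_mul, div_pow, div_pow, mul_pow, div_div, div_div, mul_one_div, div_div]
    congr 1
    ring
  have hmain : HasSum (fun m : ℕ => T^(m+1)/((m:ℝ)+1) * zet (m+1))
      (-(Real.log (Real.sin x / x))) := hswap.prod_fiberwise hcol
  have hneg := hmain.neg
  rw [neg_neg] at hneg
  refine hneg.congr_fun fun m => ?_
  have h2 : (π:ℝ) ^ (2*(m+1)) ≠ 0 := by positivity
  have h3 : ((m:ℝ)+1) ≠ 0 := by positivity
  rw [hT, div_pow, ← pow_mul, ← pow_mul]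
  field_simp


noncomputable def cc : ℕ → ℝ := fun k =>
  if Even k ∧ k ≠ 0 then -(zet (k/2) / ((k/2 : ℕ) * π ^ k)) else 0

lemma cc_eval (m : ℕ) : cc (2*(m+1)) = -(zet (m+1) / (((m:ℝ)+1) * π ^ (2*(m+1)))) := by
  have he : Even (2*(m+1)) := even_two_mul _
  have hne : 2*(m+1) ≠ 0 := by omega
  have hdiv : (2*(m+1))/2 = m+1 := by omega
  rw [cc]
  rw [if_pos ⟨he, hne⟩, hdiv]
  push_cast
  ring_nf

lemma cc_zero_of_not (k : ℕ) (h : ¬ (∃ m : ℕ, k = 2*(m+1))) : cc k = 0 := by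
  rw [cc, if_neg]
  rintro ⟨⟨r, hr⟩, hne⟩
  exact h ⟨r - 1, by omega⟩

lemma hasSum_cc_pos {x : ℝ} (hx0 : 0 < x) (hx : x < π) :
    HasSum (fun k : ℕ => cc k * x ^ k) (Real.log (Real.sin x / x)) := by
  have h := hasSum_log_sinc hx0 hx
  have hinj : Function.Injective (fun m : ℕ => 2*(m+1)) := fun a b hab => by
    simp only at hab; omega
  have hvanish : ∀ k ∉ Set.range (fun m : ℕ => 2*(m+1)),
      cc k * x ^ k = 0 := by
    intro k hk
    rw [cc_zero_of_not k (by simpa [Set.range, eq_comm] using hk), zero_mul]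
  rw [← Function.Injective.hasSum_iff hinj hvanish]
  refine h.congr_fun fun m => ?_
  simp only [Function.comp_apply, cc_eval]

lemma hasSum_cc {x : ℝ} (hx : |x| < 1) :
    HasSum (fun k : ℕ => cc k * x ^ k) (Real.log (Real.sin x / x)) := by
  have hpi := Real.pi_gt_three
  rcases lt_trichotomy x 0 with hneg | hzero | hpos
  · have h := hasSum_cc_pos (x := -x) (by linarith) (by rw [abs_of_neg hneg] at hx; linarith)
    have h2 : Real.sin (-x) / (-x) = Real.sin x / x := by
      rw [Real.sin_neg, neg_div_neg_eq]
    rw [h2] at h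
    refine h.congr_fun fun k => ?_
    by_cases hk : Even k ∧ k ≠ 0
    · rw [hk.1.neg_pow]
    · rw [cc, if_neg hk, zero_mul, zero_mul]
  · subst hzero
    have h2 : Real.log (Real.sin 0 / 0) = 0 := by
      rw [Real.sin_zero, zero_div, Real.log_zero]
    rw [h2]
    have : (fun k : ℕ => cc k * (0:ℝ) ^ k) = fun _ => 0 := by
      funext k
      cases k with
      | zero => simp [cc]
      | succ m => simp
    rw [this]
    exact hasSum_zero
  · exact hasSum_cc_pos hpos (by rw [abs_of_pos hpos] at hx; linarith)

lemma coeffs_eq_zero {d : ℕ → ℝ}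
    (h : ∀ x : ℝ, |x| < 1 → HasSum (fun k => d k * x ^ k) 0) : ∀ k, d k = 0 := by
  set p := FormalMultilinearSeries.ofScalars ℝ d with hp
  have hb : ∃ C : ℝ, ∀ k : ℕ, |d k| * (3/4 : ℝ) ^ k ≤ C := by
    have hs := (h (3/4) (by rw [abs_of_pos]; norm_num; norm_num)).summable
    have h0 : Filter.Tendsto (fun k => |d k * (3/4:ℝ)^k|) Filter.atTop (nhds 0) := by
      simpa using hs.tendsto_atTop_zero.abs
    obtain ⟨C, hC⟩ := h0.bddAbove_range
    refine ⟨C, fun k => ?_⟩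
    have := hC ⟨k, rfl⟩
    simpa [abs_mul, abs_pow, abs_of_pos (show (0:ℝ) < 3/4 by norm_num)] using this
  obtain ⟨C, hC⟩ := hb
  have hnorm : ∀ n : ℕ, ‖p n‖ = |d n| := fun n => by
    rw [hp, FormalMultilinearSeries.ofScalars_norm ℝ d n, Real.norm_eq_abs]
  have hrad : ((2⁻¹ : ℝ≥0) : ENNReal) ≤ p.radius := by
    refine p.le_radius_of_bound C (r := 2⁻¹) fun n => ?_
    rw [hnorm n]
    refine le_trans ?_ (hC n)
    have hcoe : ((2⁻¹ : ℝ≥0) : ℝ) = 2⁻¹ := by norm_num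
    rw [hcoe]
    refine mul_le_mul_of_nonneg_left ?_ (abs_nonneg _)
    exact pow_le_pow_left₀ (by norm_num) (by norm_num) n
  have hball : HasFPowerSeriesOnBall (fun _ : ℝ => (0:ℝ)) p 0 ((2⁻¹ : ℝ≥0) : ENNReal) := by
    refine ⟨hrad, by norm_num, ?_⟩
    intro y hy
    rw [mem_emetric_ball_zero_iff] at hy
    have hy1 : |y| < 1 := by
      have h2 : ‖y‖₊ < (2⁻¹ : ℝ≥0) := by exact_mod_cast hy
      have h3 : ‖y‖ < ((2⁻¹ : ℝ≥0) : ℝ) := h2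
      rw [Real.norm_eq_abs] at h3
      have h4 : ((2⁻¹ : ℝ≥0) : ℝ) = 2⁻¹ := by norm_num
      rw [h4] at h3
      linarith
    have hsum := h y hy1
    have : (fun n : ℕ => p n fun _ => y) = fun n => d n * y ^ n := by
      funext n
      rw [hp, FormalMultilinearSeries.ofScalars_apply_eq, smul_eq_mul]
    rw [this]
    simpa using hsum
  have hp0 : p = 0 := hball.hasFPowerSeriesAt.eq_zero
  have hd : d = 0 := (FormalMultilinearSeries.ofScalars_series_eq_zero ℝ).1 (hp ▸ hp0)
  exact fun k => congrFun hd k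

theorem stmt_19 (a : ℕ → ℝ) (ha0 : a 0 = 0)
    (ha : ∀ x : ℝ, |x| < π → HasSum (fun k : ℕ => a k * x ^ k) (Real.log (Real.sin x / x)))
    (n : ℕ) (hn : 0 < n) (x : ℝ) (hx0 : 0 < x) (hx : x ≤ π / 2) :
    Real.log (Real.sin x / x) - (∑ k ∈ Finset.Icc 1 10, a (2 * k) * x ^ (2 * k)) ≤ 0 ∧
      -(1.4e-12) * x ^ 22 ≤
        Real.log (Real.sin x / x) - ∑ k ∈ Finset.Icc 1 10, a (2 * k) * x ^ (2 * k) := by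
  have hpi := Real.pi_pos
  have hpi3 := Real.pi_gt_three
  have hxpi : x < π := lt_of_le_of_lt hx (by linarith)
  -- identify coefficients
  have haeq : ∀ k, a k = cc k := by
    have h0 : ∀ y : ℝ, |y| < 1 → HasSum (fun k => (a k - cc k) * y ^ k) 0 := by
      intro y hy
      have h1 := ha y (lt_trans hy (by linarith))
      have h2 := hasSum_cc hy
      have := h1.sub h2
      rw [sub_self] at this
      refine this.congr_fun fun k => ?_
      ring
    intro k
    have := coeffs_eq_zero h0 k
    linarith
  set f : ℕ → ℝ := fun m => -(zet (m+1) / (((m:ℝ)+1) * π ^ (2*(m+1)))) * x ^ (2*(m+1))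
    with hf
  have hF := hasSum_log_sinc hx0 hxpi
  have hsum : (∑ k ∈ Finset.Icc 1 10, a (2 * k) * x ^ (2 * k))
      = ∑ m ∈ Finset.range 10, f m := by
    have hmap : (Finset.range 10).map ⟨fun m => m + 1, fun a b h => by
          simpa using h⟩
        = Finset.Icc 1 10 := by
      ext k
      simp only [Finset.mem_map, Finset.mem_range, Finset.mem_Icc,
        Function.Embedding.coeFn_mk]
      dsimp only [DFunLike.coe, Function.instFunLikeEmbedding]
      constructor
      · rintro ⟨m, hm, rfl⟩; omega
      · rintro ⟨h1, h2⟩; exact ⟨k - 1, by omega, by omega⟩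
    rw [← hmap, Finset.sum_map]
    refine Finset.sum_congr rfl fun i _ => ?_
    dsimp only [DFunLike.coe, Function.instFunLikeEmbedding]
    rw [haeq (2 * (i + 1)), cc_eval, hf]
  set L := Real.log (Real.sin x / x) with hL
  set D := L - ∑ m ∈ Finset.range 10, f m with hD
  have htail : HasSum (fun m => f (m + 10)) D := by
    refine (hasSum_nat_add_iff 10).2 ?_
    rw [hD, sub_add_cancel]
    exact hF
  have hterm_nonpos : ∀ m : ℕ, f (m + 10) ≤ 0 := by
    intro m
    rw [hf]
    simp only [neg_mul]
    have h1 : 0 ≤ zet (m + 10 + 1) := zet_nonneg _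
    have h2 : (0:ℝ) < (((m + 10 : ℕ)):ℝ) + 1 := by positivity
    have h3 : (0:ℝ) < π ^ (2*(m+10+1)) := by positivity
    have h4 : (0:ℝ) ≤ x ^ (2*(m+10+1)) := by positivity
    exact neg_nonpos.2 (mul_nonneg (div_nonneg h1 (mul_pos h2 h3).le) h4)
  constructor
  · rw [hsum]
    exact hasSum_le hterm_nonpos htail hasSum_zero
  -- lower bound
  rw [hsum]
  have hxπ2 : (x/π) ≤ 1/2 := by
    rw [div_le_iff₀ hpi]
    linarith
  have hxπ0 : 0 < x/π := div_pos hx0 hpi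
  -- bounding series
  have hgeo : HasSum (fun m : ℕ => (1/12 : ℝ) * (1/4)^m) ((1/12) * (1 - 1/4)⁻¹) :=
    (hasSum_geometric_of_lt_one (by norm_num) (by norm_num)).mul_left _
  have hsingle : HasSum (fun m : ℕ => if m = 0 then (1/132 : ℝ) else 0) (1/132) :=
    hasSum_ite_eq 0 _
  have hh : HasSum (fun m : ℕ => (1/4:ℝ)^m * (if m = 0 then (1/11:ℝ) else 1/12)) (47/396) := by
    have := hgeo.add hsingle
    have heq : (fun m : ℕ => (1/12 : ℝ) * (1/4)^m + (if m = 0 then (1/132:ℝ) else 0))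
        = fun m : ℕ => (1/4:ℝ)^m * (if m = 0 then (1/11:ℝ) else 1/12) := by
      funext m
      cases m with
      | zero => norm_num
      | succ l => simp [pow_succ]; ring
    rw [heq] at this
    convert this using 1
    norm_num
  set K : ℝ := (1 + 1e-6) * (x/π)^22 with hK
  have hKsum : HasSum (fun m : ℕ => K * ((1/4:ℝ)^m * (if m = 0 then (1/11:ℝ) else 1/12)))
      (K * (47/396)) := hh.mul_left K
  have hbound : ∀ m : ℕ, -f (m + 10) ≤ K * ((1/4:ℝ)^m * (if m = 0 then (1/11:ℝ) else 1/12)) := by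
    intro m
    have hc : (((m + 10 : ℕ)):ℝ) + 1 = (m:ℝ) + 11 := by push_cast; ring
    have hm11 : (0:ℝ) < (m:ℝ) + 11 := by positivity
    have hXP : x ^ (2*(m+10+1)) / π ^ (2*(m+10+1)) = (x/π)^22 * ((x/π)^2)^m := by
      rw [← div_pow, ← pow_mul, ← pow_add]
      congr 1
      omega
    have heq : -f (m+10) = zet (m+10+1) / ((m:ℝ)+11) * ((x/π)^22 * ((x/π)^2)^m) := by
      rw [hf]
      simp only [neg_mul, neg_neg]
      rw [hc, ← div_div, div_mul_eq_mul_div, mul_div_assoc, hXP]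
    rw [heq]
    have h1 : zet (m+10+1) ≤ 1 + 1e-6 :=
      (zet_antitone (by norm_num) (by omega)).trans zet11_le
    have h2 : (1:ℝ)/((m:ℝ)+11) ≤ (if m = 0 then (1/11:ℝ) else 1/12) := by
      cases m with
      | zero => norm_num
      | succ l =>
        rw [if_neg (Nat.succ_ne_zero l)]
        apply one_div_le_one_div_of_le (by norm_num)
        have : (0:ℝ) ≤ (l:ℝ) := Nat.cast_nonneg l
        push_cast
        linarith
    have h3 : ((x/π)^2)^m ≤ (1/4:ℝ)^m := by
      apply pow_le_pow_left₀ (sq_nonneg _)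
      nlinarith
    have hz0 : 0 ≤ zet (m+10+1) := zet_nonneg _
    have hxp22 : (0:ℝ) ≤ (x/π)^22 := by positivity
    calc zet (m+10+1) / ((m:ℝ)+11) * ((x/π)^22 * ((x/π)^2)^m)
        = (zet (m+10+1) * (1/((m:ℝ)+11))) * (x/π)^22 * ((x/π)^2)^m := by ring
      _ ≤ ((1 + 1e-6) * (if m = 0 then (1/11:ℝ) else 1/12)) * (x/π)^22 * (1/4:ℝ)^m := by
          have hA : zet (m+10+1) * (1/((m:ℝ)+11))
              ≤ (1 + 1e-6) * (if m = 0 then (1/11:ℝ) else 1/12) :=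
            mul_le_mul h1 h2 (by positivity) (by norm_num)
          have hB : 0 ≤ zet (m+10+1) * (1/((m:ℝ)+11)) :=
            mul_nonneg hz0 (by positivity)
          have hC : 0 ≤ ((x/π)^2)^m := by positivity
          have := mul_le_mul (mul_le_mul hA le_rfl hxp22 (by positivity)) h3 hC
            (by positivity)
          exact this
      _ = K * ((1/4:ℝ)^m * (if m = 0 then (1/11:ℝ) else 1/12)) := by rw [hK]; ring
  have hlast : -D ≤ K * (47/396) := hasSum_le hbound htail.neg hKsum
  have hnum : K * (47/396) ≤ 1.4e-12 * x ^ 22 := by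
    have hπ22 : (3.141592:ℝ)^22 ≤ π^22 :=
      pow_le_pow_left₀ (by norm_num) Real.pi_gt_d6.le 22
    have hq : ((1:ℝ)+1e-6)*(47/396) ≤ 1.4e-12 * (3.141592:ℝ)^22 := by norm_num
    have hfrac : (x/π)^22 * (3.141592:ℝ)^22 ≤ x^22 := by
      rw [div_pow, div_mul_eq_mul_div, div_le_iff₀ (by positivity)]
      have h0 : (0:ℝ) ≤ x^22 := by positivity
      nlinarith
    calc K * (47/396) = ((1+1e-6)*(47/396)) * (x/π)^22 := by rw [hK]; ring
      _ ≤ (1.4e-12 * (3.141592:ℝ)^22) * (x/π)^22 := by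
          apply mul_le_mul_of_nonneg_right hq (by positivity)
      _ = 1.4e-12 * ((x/π)^22 * (3.141592:ℝ)^22) := by ring
      _ ≤ 1.4e-12 * x^22 := by
          apply mul_le_mul_of_nonneg_left hfrac (by norm_num)
  linarith
end
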